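/- For one-dimensional probability measures μ₁,…,μ_N with finite second moments, the measure μ whose quantile function is F_μ⁻¹ = (1/N) Σ_{i=1}^N F_{μ_i}⁻¹ minimizes ν ↦ Σ_{i=1}^N W₂²(ν, μ_i) over all probability measures ν with finite second moment (i.e., it is the 2-Wasserstein barycenter). -/

import Mathlib

open MeasureTheory ProbabilityTheory Real Set
open Filter
open scoped ENNReal NNReal

noncomputable section

/-- Quantile (generalized inverse CDF) of a measure on `ℝ`. -/
def quantile (μ : Measure ℝ) (t : ℝ) : ℝ :=
  sInf {x : ℝ | ENNReal.ofReal t ≤ μ (Set.Iic x)}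

/-- Squared 2-Wasserstein distance on `ℝ`, via the 1D quantile-function formula. -/
def W2sq (μ ν : Measure ℝ) : ℝ :=
  ∫ t in Set.Ioo (0:ℝ) 1, (quantile μ t - quantile ν t)^2

/-- Empirical measure of `n` real points. -/
def empMeasure {n : ℕ} (X : Fin n → ℝ) : Measure ℝ :=
  ((n : ℝ≥0∞))⁻¹ • ∑ i, Measure.dirac (X i)

/-- `k`-th order statistic (`k : Fin n`, so `ordStat X k` is the `(k+1)`-th smallest). -/
def ordStat {n : ℕ} (X : Fin n → ℝ) (k : Fin n) : ℝ :=
  quantile (empMeasure X) (((k : ℕ) + 1 : ℝ) / n)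

/-- Continuous uniform distribution on the interval `(a, b]`. -/
def unif (a b : ℝ) : Measure ℝ :=
  (ENNReal.ofReal (b - a))⁻¹ • volume.restrict (Set.Ioc a b)

variable {μ : Measure ℝ} [IsProbabilityMeasure μ]

lemma exists_small {t : ℝ} (ht : 0 < t) :
    ∃ x₀ : ℝ, μ (Set.Iic x₀) < ENNReal.ofReal t := by
  have hinter : ⋂ n : ℕ, Set.Iic (-(n : ℝ)) = (∅ : Set ℝ) := by
    ext x
    simp only [Set.mem_iInter, Set.mem_Iic, Set.mem_empty_iff_false, iff_false, not_forall, not_le]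
    obtain ⟨n, hn⟩ := exists_nat_gt (-x)
    exact ⟨n, by linarith⟩
  have h := tendsto_measure_iInter_atTop (μ := μ)
    (fun n : ℕ => measurableSet_Iic.nullMeasurableSet)
    (fun m n hmn => Set.Iic_subset_Iic.2 (by exact_mod_cast neg_le_neg (Nat.cast_le.2 hmn)))
    ⟨0, measure_ne_top μ _⟩
  rw [hinter, measure_empty] at h
  have := h.eventually_lt_const (by simp [ht] : (0 : ℝ≥0∞) < ENNReal.ofReal t)
  obtain ⟨n, hn⟩ := this.exists
  exact ⟨-(n : ℝ), hn⟩

lemma bddBelow_S {t : ℝ} (ht : 0 < t) :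
    BddBelow {x : ℝ | ENNReal.ofReal t ≤ μ (Set.Iic x)} := by
  obtain ⟨x₀, hx₀⟩ := exists_small (μ := μ) ht
  refine ⟨x₀, fun x hx => ?_⟩
  by_contra hlt
  push_neg at hlt
  exact absurd (le_trans hx (measure_mono (Set.Iic_subset_Iic.2 hlt.le))) hx₀.not_ge

lemma nonempty_S {t : ℝ} (ht1 : t < 1) :
    {x : ℝ | ENNReal.ofReal t ≤ μ (Set.Iic x)}.Nonempty := by
  have h := tendsto_measure_Iic_atTop (μ := μ)
  rw [measure_univ] at h
  have hlt : ENNReal.ofReal t < 1 := by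
    calc ENNReal.ofReal t < ENNReal.ofReal 1 := by
          exact ENNReal.ofReal_lt_ofReal_iff (by norm_num) |>.2 ht1
      _ = 1 := ENNReal.ofReal_one
  obtain ⟨x, hx⟩ := (h.eventually_const_le hlt).exists
  exact ⟨x, hx⟩

lemma quantile_le_iff {t x : ℝ} (ht : 0 < t) (ht1 : t < 1) :
    quantile μ t ≤ x ↔ ENNReal.ofReal t ≤ μ (Set.Iic x) := by
  constructor
  · intro h
    have key : ∀ y, x < y → ENNReal.ofReal t ≤ μ (Set.Iic y) := by
      intro y hy
      obtain ⟨s, hs, hsy⟩ := exists_lt_of_csInf_lt (nonempty_S ht1) (lt_of_le_of_lt h hy)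
      exact le_trans hs (measure_mono (Set.Iic_subset_Iic.2 hsy.le))
    have hinter : ⋂ n : ℕ, Set.Iic (x + ((n : ℝ) + 1)⁻¹) = Set.Iic x := by
      ext z
      simp only [Set.mem_iInter, Set.mem_Iic]
      constructor
      · intro hz
        by_contra hzx
        push_neg at hzx
        obtain ⟨n, hn⟩ := exists_nat_gt (z - x)⁻¹
        have hn' : ((n : ℝ) + 1)⁻¹ < z - x := by
          rw [inv_lt_comm₀ (by positivity) (by linarith)]
          calc (z - x)⁻¹ < n := hn
            _ ≤ (n : ℝ) + 1 := by linarith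
        linarith [hz n]
      · intro hz n
        have : (0 : ℝ) < ((n : ℝ) + 1)⁻¹ := by positivity
        linarith
    have hmono : Antitone (fun n : ℕ => Set.Iic (x + ((n : ℝ) + 1)⁻¹)) := by
      intro m n hmn
      apply Set.Iic_subset_Iic.2
      have hmn' : (m : ℝ) ≤ n := Nat.cast_le.2 hmn
      have : ((n : ℝ) + 1)⁻¹ ≤ ((m : ℝ) + 1)⁻¹ := by
        apply inv_anti₀ (by positivity)
        linarith
      linarith
    have htend := tendsto_measure_iInter_atTop (μ := μ)
      (fun n : ℕ => measurableSet_Iic.nullMeasurableSet) hmono ⟨0, measure_ne_top μ _⟩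
    rw [hinter] at htend
    refine ge_of_tendsto htend (Eventually.of_forall fun n => ?_)
    exact key _ (lt_add_of_pos_right x (by positivity))
  · intro h
    exact csInf_le (bddBelow_S ht) h

lemma quantile_monotoneOn : MonotoneOn (quantile μ) (Set.Ioo (0:ℝ) 1) := by
  intro t ht t' ht' htt'
  apply csInf_le_csInf (bddBelow_S ht.1) (nonempty_S ht'.2)
  intro x hx
  exact le_trans (ENNReal.ofReal_le_ofReal htt') hx

lemma quantile_aemeasurable :
    AEMeasurable (quantile μ) (volume.restrict (Set.Ioo (0:ℝ) 1)) :=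
  aemeasurable_restrict_of_monotoneOn measurableSet_Ioo quantile_monotoneOn

lemma map_quantile :
    Measure.map (quantile μ) (volume.restrict (Set.Ioo (0:ℝ) 1)) = μ := by
  have hae := quantile_aemeasurable (μ := μ)
  have hfin : IsFiniteMeasure (Measure.map (quantile μ) (volume.restrict (Set.Ioo (0:ℝ) 1))) := by
    constructor
    rw [Measure.map_apply_of_aemeasurable hae MeasurableSet.univ]
    simp [Real.volume_Ioo]
  refine Measure.ext_of_Iic _ _ (fun x => ?_)
  rw [Measure.map_apply_of_aemeasurable hae measurableSet_Iic,
    Measure.restrict_apply' measurableSet_Ioo]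
  set c : ℝ := (μ (Set.Iic x)).toReal with hc
  have hctop : μ (Set.Iic x) ≠ ∞ := measure_ne_top μ _
  have hc0 : 0 ≤ c := ENNReal.toReal_nonneg
  have hc1 : c ≤ 1 := by
    rw [hc]
    exact ENNReal.toReal_le_of_le_ofReal (by norm_num) (by simpa using prob_le_one)
  have hset : quantile μ ⁻¹' Set.Iic x ∩ Set.Ioo 0 1
      = {t : ℝ | t ∈ Set.Ioo (0:ℝ) 1 ∧ t ≤ c} := by
    ext t
    simp only [Set.mem_inter_iff, Set.mem_preimage, Set.mem_Iic, Set.mem_setOf_eq]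
    constructor
    · rintro ⟨h1, h2⟩
      refine ⟨h2, ?_⟩
      rw [← ENNReal.ofReal_le_iff_le_toReal hctop]
      exact (quantile_le_iff h2.1 h2.2).1 h1
    · rintro ⟨h2, h1⟩
      refine ⟨(quantile_le_iff h2.1 h2.2).2 ?_, h2⟩
      rwa [ENNReal.ofReal_le_iff_le_toReal hctop]
  rw [hset]
  rcases lt_or_eq_of_le hc1 with h | h
  · have : {t : ℝ | t ∈ Set.Ioo (0:ℝ) 1 ∧ t ≤ c} = Set.Ioc 0 c := by
      ext t
      simp only [Set.mem_setOf_eq, Set.mem_Ioo, Set.mem_Ioc]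
      constructor
      · rintro ⟨⟨h1, _⟩, h3⟩; exact ⟨h1, h3⟩
      · rintro ⟨h1, h3⟩; exact ⟨⟨h1, lt_of_le_of_lt h3 h⟩, h3⟩
    rw [this, Real.volume_Ioc, sub_zero, hc, ENNReal.ofReal_toReal hctop]
  · have : {t : ℝ | t ∈ Set.Ioo (0:ℝ) 1 ∧ t ≤ c} = Set.Ioo 0 1 := by
      ext t
      simp only [Set.mem_setOf_eq, Set.mem_Ioo]
      exact ⟨fun ⟨h1, _⟩ => h1, fun h1 => ⟨h1, h1.2.le.trans h.ge⟩⟩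
    rw [this, Real.volume_Ioo, sub_zero, show (1:ℝ) = c from h.symm, hc,
      ENNReal.ofReal_toReal hctop]

lemma quantile_memℒp (h2 : Integrable (fun x => x^2) μ) :
    MemLp (quantile μ) 2 (volume.restrict (Set.Ioo (0:ℝ) 1)) := by
  rw [memLp_two_iff_integrable_sq (quantile_aemeasurable.aestronglyMeasurable)]
  rw [← map_quantile (μ := μ)] at h2
  exact (integrable_map_measure ((measurable_id.pow_const 2).aestronglyMeasurable)
    quantile_aemeasurable).1 h2

/-- the measure whose quantile function is the average of the quantile
functions minimizes the sum of squared 2-Wasserstein distances. -/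
theorem stmt2 {N : ℕ} (hN : 0 < N) (μ : Fin N → Measure ℝ)
    (hprob : ∀ i, IsProbabilityMeasure (μ i))
    (h2 : ∀ i, Integrable (fun x => x^2) (μ i))
    (μbar : Measure ℝ) (hbarprob : IsProbabilityMeasure μbar)
    (hbar2 : Integrable (fun x => x^2) μbar)
    (hbar : ∀ t ∈ Set.Ioo (0:ℝ) 1, quantile μbar t = (N:ℝ)⁻¹ * ∑ i, quantile (μ i) t) :
    ∀ ν : Measure ℝ, IsProbabilityMeasure ν → Integrable (fun x => x^2) ν →
      ∑ i, W2sq μbar (μ i) ≤ ∑ i, W2sq ν (μ i) := by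
  intro ν hν hν2
  haveI := hν
  haveI := hbarprob
  haveI := fun i => hprob i
  have hmemi : ∀ i, MemLp (quantile (μ i)) 2 (volume.restrict (Set.Ioo (0:ℝ) 1)) :=
    fun i => quantile_memℒp (h2 i)
  have hmemb : MemLp (quantile μbar) 2 (volume.restrict (Set.Ioo (0:ℝ) 1)) :=
    quantile_memℒp hbar2
  have hmemν : MemLp (quantile ν) 2 (volume.restrict (Set.Ioo (0:ℝ) 1)) :=
    quantile_memℒp hν2
  have hintf : ∀ i, Integrable (fun t => (quantile μbar t - quantile (μ i) t)^2)
      (volume.restrict (Set.Ioo (0:ℝ) 1)) :=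
    fun i => (hmemb.sub (hmemi i)).integrable_sq
  have hintg : ∀ i, Integrable (fun t => (quantile ν t - quantile (μ i) t)^2)
      (volume.restrict (Set.Ioo (0:ℝ) 1)) :=
    fun i => (hmemν.sub (hmemi i)).integrable_sq
  have hpt : ∀ t ∈ Set.Ioo (0:ℝ) 1,
      ∑ i, (quantile μbar t - quantile (μ i) t)^2
        ≤ ∑ i, (quantile ν t - quantile (μ i) t)^2 := by
    intro t ht
    set a := quantile ν t with ha
    set b := quantile μbar t with hbdef
    have hNpos : (0:ℝ) < N := by exact_mod_cast hN
    have hS : ∑ i, quantile (μ i) t = (N : ℝ) * b := by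
      rw [hbdef, hbar t ht]; field_simp
    have expand : ∀ c : ℝ, ∑ i, (c - quantile (μ i) t)^2
        = N * c^2 - 2 * c * (∑ i, quantile (μ i) t) + ∑ i, (quantile (μ i) t)^2 := by
      intro c
      have h1 : ∀ i ∈ Finset.univ, (c - quantile (μ i) t)^2
          = c^2 - 2*c*quantile (μ i) t + (quantile (μ i) t)^2 := fun i _ => by ring
      rw [Finset.sum_congr rfl h1, Finset.sum_add_distrib, Finset.sum_sub_distrib,
        Finset.sum_const, Finset.card_univ, Fintype.card_fin, ← Finset.mul_sum,
        nsmul_eq_mul]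
    rw [expand a, expand b, hS]
    nlinarith [mul_nonneg hNpos.le (sq_nonneg (a - b))]
  calc ∑ i, W2sq μbar (μ i)
      = ∫ t in Set.Ioo (0:ℝ) 1, ∑ i, (quantile μbar t - quantile (μ i) t)^2 :=
        (integral_finset_sum _ (fun i _ => hintf i)).symm
    _ ≤ ∫ t in Set.Ioo (0:ℝ) 1, ∑ i, (quantile ν t - quantile (μ i) t)^2 := by
        refine integral_mono_ae (integrable_finset_sum _ (fun i _ => hintf i))
          (integrable_finset_sum _ (fun i _ => hintg i)) ?_
        filter_upwards [ae_restrict_mem measurableSet_Ioo] with t ht using hpt t ht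
    _ = ∑ i, W2sq ν (μ i) := integral_finset_sum _ (fun i _ => hintg i)
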